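/- Let H be the nr×nr block matrix (r×r blocks of size n×n) with identity blocks 1_n on the diagonal, blocks −1_n on the superdiagonal (positions (i, i+1)), and zero blocks elsewhere; let T̂ be the nr×nr block diagonal matrix whose i-th diagonal block is t_i·1_n; and let G be the nr×nr block matrix that is zero outside its last (r-th) block row and whose (r, k) block equals ∑_{j=1}^{k} (t − t_j)^{-1} A_j for k = 1,...,r. Then H·(t·1 − T̂) is invertible and G = H·(t·1 − T̂) · D^0 · (H·(t·1 − T̂))^{-1}, where D^0 is the naive convolution matrix with parameter μ = 0. -/

import Mathlib

/-- The block matrix `B_k^μ`: zero outside the `k`-th block row, with `k`-th block row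
`(A_1, …, A_{k-1}, A_k + μ·1, A_{k+1}, …, A_r)`. -/
def convBlock {K : Type*} [Field K] {n r : ℕ}
    (A : Fin r → Matrix (Fin n) (Fin n) K) (μ : K) (k : Fin r) :
    Matrix (Fin r × Fin n) (Fin r × Fin n) K :=
  fun p q =>
    if p.1 = k then A q.1 p.2 q.2 + (if q.1 = k ∧ p.2 = q.2 then μ else 0) else 0

/-- The block matrix `H` with identity blocks on the diagonal, `-1` blocks on the
superdiagonal and zero blocks elsewhere. -/
def Hmat {K : Type*} [Field K] (n r : ℕ) :
    Matrix (Fin r × Fin n) (Fin r × Fin n) K :=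
  fun p q =>
    if p.1 = q.1 ∧ p.2 = q.2 then 1
    else if q.1.val = p.1.val + 1 ∧ p.2 = q.2 then -1 else 0

/-- The matrix `G`: zero outside the last block row, with `(r,k)`-block
`∑_{j=1}^{k} (t - t_j)⁻¹ A_j`. -/
def Gmat {K : Type*} [Field K] {n r : ℕ} (t : K) (ts : Fin r → K)
    (A : Fin r → Matrix (Fin n) (Fin n) K) :
    Matrix (Fin r × Fin n) (Fin r × Fin n) K :=
  fun p q =>
    if p.1.val = r - 1 then
      ∑ j ∈ Finset.univ.filter (fun j : Fin r => j ≤ q.1), (t - ts j)⁻¹ * A j p.2 q.2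
    else 0

section aux
variable {K : Type*} [Field K] {n r : ℕ}

lemma Hmat_row_succ (p : Fin r × Fin n) (h : p.1.val + 1 < r) (m : Fin r × Fin n) :
    Hmat (K := K) n r p m =
      (if m = p then 1 else 0) + (if m = ((⟨p.1.val + 1, h⟩ : Fin r), p.2) then -1 else 0) := by
  simp only [Hmat]
  by_cases h1 : m = p
  · subst h1
    have hne : m ≠ ((⟨m.1.val + 1, h⟩ : Fin r), m.2) := by
      intro hc
      have := congrArg (fun z => (Prod.fst z : Fin r).val) hc
      simp at this
    simp [hne]
  · by_cases h2 : m = ((⟨p.1.val + 1, h⟩ : Fin r), p.2)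
    · subst h2
      have hne1 : ¬ ((p.1 : Fin r) = ⟨p.1.val + 1, h⟩) := by
        intro a
        have := congrArg Fin.val a; simp at this
      simp [hne1, h1]
    · have hne1 : ¬ (p.1 = m.1 ∧ p.2 = m.2) := by
        intro ⟨a, b⟩; exact h1 (Prod.ext a.symm b.symm)
      have hne2 : ¬ (m.1.val = p.1.val + 1 ∧ p.2 = m.2) := by
        intro ⟨a, b⟩; exact h2 (Prod.ext (Fin.ext a) b.symm)
      simp [hne1, hne2, h1, h2]

lemma Hmat_row_last (p : Fin r × Fin n) (h : ¬ p.1.val + 1 < r) (m : Fin r × Fin n) :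
    Hmat (K := K) n r p m = (if m = p then 1 else 0) := by
  simp only [Hmat]
  by_cases h1 : m = p
  · subst h1; simp
  · have hne1 : ¬ (p.1 = m.1 ∧ p.2 = m.2) := by
      intro ⟨a, b⟩; exact h1 (Prod.ext a.symm b.symm)
    have hne2 : ¬ (m.1.val = p.1.val + 1 ∧ p.2 = m.2) := by
      intro ⟨a, _⟩; exact absurd (a ▸ m.1.isLt) h
    simp [hne1, hne2, h1]

lemma H_mul_apply (X : Matrix (Fin r × Fin n) (Fin r × Fin n) K) (p q : Fin r × Fin n) :
    (Hmat n r * X : Matrix (Fin r × Fin n) (Fin r × Fin n) K) p q =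
      X p q - (if h : p.1.val + 1 < r then X (⟨p.1.val + 1, h⟩, p.2) q else 0) := by
  rw [Matrix.mul_apply]
  by_cases h : p.1.val + 1 < r
  · calc ∑ m, Hmat (K := K) n r p m * X m q
        = ∑ m, ((if m = p then (1:K) else 0)
            + (if m = ((⟨p.1.val + 1, h⟩ : Fin r), p.2) then -1 else 0)) * X m q :=
          Finset.sum_congr rfl fun m _ => by rw [Hmat_row_succ p h m]
      _ = _ := by
          simp only [add_mul, ite_mul, one_mul, zero_mul, neg_one_mul,
            Finset.sum_add_distrib, Finset.sum_ite_eq', Finset.mem_univ, if_true, dif_pos h]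
          ring
  · calc ∑ m, Hmat (K := K) n r p m * X m q
        = ∑ m, (if m = p then (1:K) else 0) * X m q :=
          Finset.sum_congr rfl fun m _ => by rw [Hmat_row_last p h m]
      _ = _ := by
          simp only [ite_mul, one_mul, zero_mul, Finset.sum_ite_eq', Finset.mem_univ, if_true,
            dif_neg h]
          ring

lemma Hmat_col_pos (q : Fin r × Fin n) (h : 0 < q.1.val) (m : Fin r × Fin n) :
    Hmat (K := K) n r m q =
      (if m = q then 1 else 0) +
        (if m = ((⟨q.1.val - 1, by omega⟩ : Fin r), q.2) then -1 else 0) := by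
  simp only [Hmat]
  by_cases h1 : m = q
  · subst h1
    have hne : m ≠ ((⟨m.1.val - 1, by omega⟩ : Fin r), m.2) := by
      intro hc
      have := congrArg (fun z => (Prod.fst z : Fin r).val) hc
      simp at this; omega
    simp [hne]
  · by_cases h2 : m = ((⟨q.1.val - 1, by omega⟩ : Fin r), q.2)
    · have hne1 : ¬ (m.1 = q.1 ∧ m.2 = q.2) := by
        intro ⟨a, _⟩
        have hv := congrArg (fun z => (Prod.fst z : Fin r).val) h2
        simp at hv
        have := congrArg Fin.val a
        omega
      have hc2 : q.1.val = m.1.val + 1 ∧ m.2 = q.2 := by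
        have hv := congrArg (fun z => (Prod.fst z : Fin r).val) h2
        have hv2 := congrArg (fun z => (Prod.snd z : Fin n)) h2
        simp at hv hv2
        exact ⟨by omega, hv2⟩
      rw [if_neg hne1, if_pos hc2, if_neg h1, if_pos h2]
      ring
    · have hne1 : ¬ (m.1 = q.1 ∧ m.2 = q.2) := by
        intro ⟨a, b⟩; exact h1 (Prod.ext a b)
      have hne2 : ¬ (q.1.val = m.1.val + 1 ∧ m.2 = q.2) := by
        intro ⟨a, b⟩
        have : m.1.val = q.1.val - 1 := by omega
        exact h2 (Prod.ext (Fin.ext this) b)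
      simp [hne1, hne2, h1, h2]

lemma Hmat_col_zero (q : Fin r × Fin n) (h : ¬ 0 < q.1.val) (m : Fin r × Fin n) :
    Hmat (K := K) n r m q = (if m = q then 1 else 0) := by
  simp only [Hmat]
  by_cases h1 : m = q
  · subst h1; simp
  · have hne1 : ¬ (m.1 = q.1 ∧ m.2 = q.2) := by
      intro ⟨a, b⟩; exact h1 (Prod.ext a b)
    have hne2 : ¬ (q.1.val = m.1.val + 1 ∧ m.2 = q.2) := by
      intro ⟨a, _⟩; omega
    simp [hne1, hne2, h1]

lemma mul_H_apply (X : Matrix (Fin r × Fin n) (Fin r × Fin n) K) (p q : Fin r × Fin n) :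
    (X * Hmat n r : Matrix (Fin r × Fin n) (Fin r × Fin n) K) p q =
      X p q - (if h : 0 < q.1.val then X p (⟨q.1.val - 1, by omega⟩, q.2) else 0) := by
  rw [Matrix.mul_apply]
  by_cases h : 0 < q.1.val
  · calc ∑ m, X p m * Hmat (K := K) n r m q
        = ∑ m, X p m * ((if m = q then (1:K) else 0) +
            (if m = ((⟨q.1.val - 1, by omega⟩ : Fin r), q.2) then -1 else 0)) :=
          Finset.sum_congr rfl fun m _ => by rw [Hmat_col_pos q h m]
      _ = _ := by
          simp only [mul_add, mul_ite, mul_one, mul_zero, mul_neg_one,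
            Finset.sum_add_distrib, Finset.sum_ite_eq', Finset.mem_univ, if_true, dif_pos h]
          ring
  · calc ∑ m, X p m * Hmat (K := K) n r m q
        = ∑ m, X p m * (if m = q then (1:K) else 0) :=
          Finset.sum_congr rfl fun m _ => by rw [Hmat_col_zero q h m]
      _ = _ := by
          simp only [mul_ite, mul_one, mul_zero, Finset.sum_ite_eq', Finset.mem_univ, if_true,
            dif_neg h]
          ring
end aux

section main
variable {K : Type*} [Field K] {n r : ℕ}

/-- Explicit inverse of `Hmat`. -/
def HmatInv (K : Type*) [Field K] (n r : ℕ) :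
    Matrix (Fin r × Fin n) (Fin r × Fin n) K :=
  fun p q => if p.1 ≤ q.1 ∧ p.2 = q.2 then 1 else 0

lemma Hmat_mul_HmatInv : (Hmat (K := K) n r) * HmatInv K n r = 1 := by
  ext p q
  rw [H_mul_apply, Matrix.one_apply]
  simp only [HmatInv]
  by_cases h : p.1.val + 1 < r
  · rw [dif_pos h]
    by_cases hpq : p = q
    · subst hpq
      have h1 : p.1 ≤ p.1 ∧ p.2 = p.2 := ⟨le_refl _, rfl⟩
      have h2 : ¬ ((⟨p.1.val + 1, h⟩ : Fin r) ≤ p.1 ∧ (p.2 : Fin n) = p.2) := by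
        intro ⟨a, _⟩; rw [Fin.le_def] at a; simp at a
      simp [h1, h2, Fin.lt_def]
    · by_cases h1 : p.1 ≤ q.1 ∧ p.2 = q.2
      · have h2 : (⟨p.1.val + 1, h⟩ : Fin r) ≤ q.1 ∧ (p.2 : Fin n) = q.2 := by
          refine ⟨?_, h1.2⟩
          rw [Fin.le_def]
          have : p.1.val ≠ q.1.val := by
            intro hv; exact hpq (Prod.ext (Fin.ext hv) h1.2)
          have := h1.1; rw [Fin.le_def] at this
          simpa using by omega
        simp [h1, h2, hpq]
      · have h2 : ¬ ((⟨p.1.val + 1, h⟩ : Fin r) ≤ q.1 ∧ (p.2 : Fin n) = q.2) := by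
          intro ⟨a, b⟩
          rw [Fin.le_def] at a; simp at a
          exact h1 ⟨by rw [Fin.le_def]; omega, b⟩
        simp [h1, h2, hpq]
  · rw [dif_neg h]
    have hlast : p.1.val = r - 1 := by have := p.1.isLt; omega
    by_cases hpq : p = q
    · subst hpq; simp
    · have h1 : ¬ (p.1 ≤ q.1 ∧ p.2 = q.2) := by
        intro ⟨a, b⟩
        rw [Fin.le_def] at a
        have := q.1.isLt
        have : p.1.val = q.1.val := by omega
        exact hpq (Prod.ext (Fin.ext this) b)
      simp [h1, hpq]

lemma HmatInv_mul_Hmat : HmatInv K n r * (Hmat (K := K) n r) = 1 := by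
  ext p q
  rw [mul_H_apply, Matrix.one_apply]
  simp only [HmatInv]
  by_cases h : 0 < q.1.val
  · rw [dif_pos h]
    by_cases hpq : p = q
    · subst hpq
      have h2 : ¬ (p.1 ≤ (⟨p.1.val - 1, by omega⟩ : Fin r) ∧ (p.2 : Fin n) = p.2) := by
        intro ⟨a, _⟩; rw [Fin.le_def] at a; simp at a; omega
      simp [h2, Fin.lt_def]
      omega
    · by_cases h1 : p.1 ≤ q.1 ∧ p.2 = q.2
      · have h2 : p.1 ≤ (⟨q.1.val - 1, by omega⟩ : Fin r) ∧ (p.2 : Fin n) = q.2 := by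
          refine ⟨?_, h1.2⟩
          rw [Fin.le_def]
          have hne : p.1.val ≠ q.1.val := by
            intro hv; exact hpq (Prod.ext (Fin.ext hv) h1.2)
          have := h1.1; rw [Fin.le_def] at this
          simpa using by omega
        simp [h1, h2, hpq]
      · have h2 : ¬ (p.1 ≤ (⟨q.1.val - 1, by omega⟩ : Fin r) ∧ (p.2 : Fin n) = q.2) := by
          intro ⟨a, b⟩
          rw [Fin.le_def] at a; simp at a
          exact h1 ⟨by rw [Fin.le_def]; omega, b⟩
        simp [h1, h2, hpq]
  · rw [dif_neg h]
    by_cases hpq : p = q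
    · subst hpq; simp
    · have h1 : ¬ (p.1 ≤ q.1 ∧ p.2 = q.2) := by
        intro ⟨a, b⟩
        rw [Fin.le_def] at a
        have : p.1.val = q.1.val := by omega
        exact hpq (Prod.ext (Fin.ext this) b)
      simp [h1, hpq]

lemma isUnit_Hmat : IsUnit (Hmat (K := K) n r) := by
  have : Invertible (Hmat (K := K) n r) :=
    ⟨HmatInv K n r, HmatInv_mul_Hmat, Hmat_mul_HmatInv⟩
  exact isUnit_of_invertible _

lemma D_apply (t : K) (ts : Fin r → K) (A : Fin r → Matrix (Fin n) (Fin n) K)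
    (p q : Fin r × Fin n) :
    (∑ k, (t - ts k)⁻¹ • convBlock A (0 : K) k) p q = (t - ts p.1)⁻¹ * A q.1 p.2 q.2 := by
  simp only [Matrix.sum_apply, Matrix.smul_apply, convBlock, ite_self, add_zero, smul_ite,
    smul_zero, smul_eq_mul, mul_ite, mul_zero]
  rw [Finset.sum_ite_eq]
  simp

lemma S_eq_diagonal (t : K) (ts : Fin r → K) :
    t • (1 : Matrix (Fin r × Fin n) (Fin r × Fin n) K) -
        Matrix.diagonal (fun q : Fin r × Fin n => ts q.1) =
      Matrix.diagonal (fun q : Fin r × Fin n => t - ts q.1) := by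
  ext p q
  by_cases h : p = q
  · subst h; simp [Matrix.diagonal, Matrix.one_apply]
  · simp [Matrix.diagonal_apply_ne _ h, Matrix.one_apply_ne h, Matrix.sub_apply]

end main

section thm
variable {K : Type*} [Field K] {n r : ℕ}

lemma filter_le_eq_insert (q1 : Fin r) (h : 0 < q1.val) :
    Finset.univ.filter (fun j : Fin r => j ≤ q1) =
      insert q1 (Finset.univ.filter (fun j : Fin r => j ≤ (⟨q1.val - 1, by omega⟩ : Fin r))) := by
  ext j
  simp only [Finset.mem_filter, Finset.mem_univ, true_and, Finset.mem_insert, Fin.le_def,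
    Fin.ext_iff]
  omega

lemma not_mem_filter_prev (q1 : Fin r) (h : 0 < q1.val) :
    q1 ∉ Finset.univ.filter (fun j : Fin r => j ≤ (⟨q1.val - 1, by omega⟩ : Fin r)) := by
  simp only [Finset.mem_filter, Finset.mem_univ, true_and, Fin.le_def]
  omega

lemma filter_le_zero_eq (q1 : Fin r) (h : q1.val = 0) :
    Finset.univ.filter (fun j : Fin r => j ≤ q1) = {q1} := by
  ext j
  simp only [Finset.mem_filter, Finset.mem_univ, true_and, Finset.mem_singleton, Fin.le_def,
    Fin.ext_iff]
  omega

end thm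


/-- `H·(t·1 - T̂)` is invertible and conjugates the naive convolution `D^0` into `G`:
`G = H·(t·1 - T̂) · D^0 · (H·(t·1 - T̂))⁻¹`. -/
theorem naive_convolution_conjugate_to_G
    {K : Type*} [Field K] {n r : ℕ}
    (t : K) (ts : Fin r → K)
    (hdist : Function.Injective ts) (htne : ∀ i, t ≠ ts i)
    (A : Fin r → Matrix (Fin n) (Fin n) K) :
    IsUnit (Hmat n r * (t • (1 : Matrix (Fin r × Fin n) (Fin r × Fin n) K) -
        Matrix.diagonal (fun q : Fin r × Fin n => ts q.1))) ∧
      Gmat t ts A =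
        (Hmat n r * (t • (1 : Matrix (Fin r × Fin n) (Fin r × Fin n) K) -
            Matrix.diagonal (fun q : Fin r × Fin n => ts q.1))) *
          (∑ k, (t - ts k)⁻¹ • convBlock A (0 : K) k) *
          (Hmat n r * (t • (1 : Matrix (Fin r × Fin n) (Fin r × Fin n) K) -
            Matrix.diagonal (fun q : Fin r × Fin n => ts q.1)))⁻¹ := by
  classical
  have hd : ∀ m : Fin r × Fin n, t - ts m.1 ≠ 0 := fun m => sub_ne_zero.mpr (htne m.1)
  have hS := S_eq_diagonal (n := n) t ts
  have hSunit : IsUnit (Matrix.diagonal (fun q : Fin r × Fin n => t - ts q.1)) := by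
    rw [Matrix.isUnit_diagonal]
    exact IsUnit.of_mul_eq_one (fun q : Fin r × Fin n => (t - ts q.1)⁻¹)
      (funext fun q => mul_inv_cancel₀ (hd q))
  have hM' : IsUnit (Hmat (K := K) n r *
      Matrix.diagonal (fun q : Fin r × Fin n => t - ts q.1)) :=
    isUnit_Hmat.mul hSunit
  constructor
  · rw [hS]; exact hM'
  rw [hS]
  have hdet := (Matrix.isUnit_iff_isUnit_det _).mp hM'
  set E : Matrix (Fin r × Fin n) (Fin r × Fin n) K :=
    Matrix.of (fun m q' : Fin r × Fin n => A q'.1 m.2 q'.2) with hE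
  have hDd : Matrix.diagonal (fun q : Fin r × Fin n => t - ts q.1) *
      (∑ k, (t - ts k)⁻¹ • convBlock A (0 : K) k) = E := by
    ext m q'
    rw [Matrix.diagonal_mul, D_apply, ← mul_assoc, mul_inv_cancel₀ (hd m), one_mul]
    rfl
  have key : Gmat t ts A *
      (Hmat n r * Matrix.diagonal (fun q : Fin r × Fin n => t - ts q.1)) =
      (Hmat n r * Matrix.diagonal (fun q : Fin r × Fin n => t - ts q.1)) *
        (∑ k, (t - ts k)⁻¹ • convBlock A (0 : K) k) := by
    rw [← Matrix.mul_assoc, Matrix.mul_assoc (Hmat n r), hDd]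
    ext p q
    rw [Matrix.mul_diagonal, mul_H_apply, H_mul_apply]
    by_cases hp : p.1.val = r - 1
    · have hnp : ¬ (p.1.val + 1 < r) := by have := p.1.isLt; omega
      rw [dif_neg hnp, sub_zero]
      simp only [hE, Matrix.of_apply]
      by_cases hq : 0 < q.1.val
      · rw [dif_pos hq]
        simp only [Gmat, hp, eq_self_iff_true, if_true]
        rw [filter_le_eq_insert q.1 hq, Finset.sum_insert (not_mem_filter_prev q.1 hq),
          add_sub_cancel_right, mul_comm, ← mul_assoc, mul_inv_cancel₀ (hd q), one_mul]
      · rw [dif_neg hq, sub_zero]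
        simp only [Gmat, hp, eq_self_iff_true, if_true]
        rw [filter_le_zero_eq q.1 (by omega), Finset.sum_singleton,
          mul_comm, ← mul_assoc, mul_inv_cancel₀ (hd q), one_mul]
    · have hnp : p.1.val + 1 < r := by have := p.1.isLt; omega
      rw [dif_pos hnp]
      simp [Gmat, hp, hE]
  calc Gmat t ts A
      = Gmat t ts A *
          (Hmat n r * Matrix.diagonal (fun q : Fin r × Fin n => t - ts q.1)) *
          (Hmat n r * Matrix.diagonal (fun q : Fin r × Fin n => t - ts q.1))⁻¹ :=
        (Matrix.mul_nonsing_inv_cancel_right _ _ hdet).symm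
    _ = _ := by rw [key]
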